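/- arXiv:1606.05380 — 2 statements merged into one kernel-verified Lean document; each statement's English description precedes it below -/
import Mathlib

section
/- Every generator of a non-singular quadric Q in PG(n,2) of projective index g, relative to a fixed s-space α contained in Q with 0 ≤ s < g, contains at least one point of type (ii), i.e., a point P ∉ α such that the span ⟨α,P⟩ is an (s+1)-space contained in Q. -/
section Defs

variable {K V : Type*} [Field K] [AddCommGroup V] [Module K V]

/-- A submodule is totally singular for `Q` if `Q` vanishes on it
(i.e. the corresponding projective subspace is contained in the quadric). -/
def totallySingular (Q : QuadraticForm K V) (W : Submodule K V) : Prop :=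
  ∀ v ∈ W, Q v = 0

/-- The quadric defined by `Q` is non-singular: no nonzero singular vector lies
in the radical of the polar form. -/
def quadricNonsingular (Q : QuadraticForm K V) : Prop :=
  ∀ v : V, v ≠ 0 → Q v = 0 → ∃ w : V, QuadraticMap.polar ⇑Q v w ≠ 0

/-- The quadric of `Q` has projective index `g`: it contains a projective subspace of
dimension `g` and none of larger dimension. -/
def projIndex (Q : QuadraticForm K V) (g : ℕ) : Prop :=
  (∃ W : Submodule K V, totallySingular Q W ∧ Module.finrank K W = g + 1) ∧
  ∀ W : Submodule K V, totallySingular Q W → Module.finrank K W ≤ g + 1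

/-- A generator: a `g`-dimensional projective subspace contained in the quadric. -/
def isGenerator (Q : QuadraticForm K V) (g : ℕ) (W : Submodule K V) : Prop :=
  totallySingular Q W ∧ Module.finrank K W = g + 1

/-- The points of the quadric, as projective points. -/
abbrev QuadricPoint (Q : QuadraticForm K V) :=
  {p : Projectivization K V // Q p.rep = 0}

/-- The point-graph of the quadric: two points are adjacent when the line joining them
is contained in the quadric. -/
def pointGraph (Q : QuadraticForm K V) : SimpleGraph (QuadricPoint Q) where
  Adj p q := p ≠ q ∧ totallySingular Q (p.1.submodule ⊔ q.1.submodule)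
  symm := by
    refine ⟨?_⟩
    rintro p q ⟨h1, h2⟩
    exact ⟨h1.symm, by rwa [sup_comm]⟩
  loopless := by refine ⟨?_⟩; rintro p ⟨h1, -⟩; exact h1 rfl

/-- Type (ii) points relative to `α`: points outside `α` lying in an
`(s+1)`-space of the quadric through `α`. -/
def typeII (Q : QuadraticForm K V) (α : Submodule K V) (p : QuadricPoint Q) : Prop :=
  p.1.rep ∉ α ∧ totallySingular Q (α ⊔ p.1.submodule)

/-- Type (iii) points relative to `α`: the remaining points outside `α`. -/
def typeIII (Q : QuadraticForm K V) (α : Submodule K V) (p : QuadricPoint Q) : Prop :=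
  p.1.rep ∉ α ∧ ¬ totallySingular Q (α ⊔ p.1.submodule)

/-- A pair of points, one of type (ii), the other of type (iii). -/
def mixedPair (Q : QuadraticForm K V) (α : Submodule K V) (p q : QuadricPoint Q) : Prop :=
  (typeII Q α p ∧ typeIII Q α q) ∨ (typeII Q α q ∧ typeIII Q α p)

lemma mixedPair_comm (Q : QuadraticForm K V) (α : Submodule K V) (p q : QuadricPoint Q) :
    mixedPair Q α p q ↔ mixedPair Q α q p := by
  unfold mixedPair; exact or_comm

/-- The line joining `p` and `q` is a 2-secant: it meets the quadric in exactly two points. -/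
def secant2 (Q : QuadraticForm K V) (p q : QuadricPoint Q) : Prop :=
  {x : Projectivization K V | x.rep ∈ p.1.submodule ⊔ q.1.submodule ∧ Q x.rep = 0}.ncard = 2

lemma secant2_comm (Q : QuadraticForm K V) (p q : QuadricPoint Q) :
    secant2 Q p q ↔ secant2 Q q p := by
  unfold secant2; rw [sup_comm]

/-- The switched graph `Γ_s`: same as the point-graph, except that a type (ii) point and a
type (iii) point are adjacent iff their joining line is a 2-secant of the quadric. -/
def gammaS (Q : QuadraticForm K V) (α : Submodule K V) : SimpleGraph (QuadricPoint Q) where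
  Adj p q := p ≠ q ∧ (mixedPair Q α p q → secant2 Q p q) ∧
    (¬ mixedPair Q α p q → totallySingular Q (p.1.submodule ⊔ q.1.submodule))
  symm := by
    refine ⟨?_⟩
    rintro p q ⟨h1, h2, h3⟩
    refine ⟨h1.symm, fun h => (secant2_comm Q p q).mp (h2 ((mixedPair_comm Q α q p).mp h)),
      fun h => ?_⟩
    have := h3 (fun hx => h ((mixedPair_comm Q α p q).mp hx))
    rwa [sup_comm]
  loopless := by refine ⟨?_⟩; rintro p ⟨h1, -⟩; exact h1 rfl

/-- `v` has exactly half of the vertices of `X` as neighbours. -/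
def halfIn {Ω : Type*} (G : SimpleGraph Ω) (X : Set Ω) (v : Ω) : Prop :=
  2 * (X ∩ G.neighborSet v).ncard = X.ncard

/-- The Godsil–McKay switch of `G` with respect to the part `X`: every vertex outside `X`
having exactly half of `X` as neighbours has its edges to `X` complemented. -/
def gmSwitch {Ω : Type*} (G : SimpleGraph Ω) (X : Set Ω) : SimpleGraph Ω where
  Adj v w :=
    (((v ∈ X ∧ w ∉ X ∧ halfIn G X w) ∨ (w ∈ X ∧ v ∉ X ∧ halfIn G X v)) ∧
        ¬ G.Adj v w ∧ v ≠ w) ∨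
    (¬ ((v ∈ X ∧ w ∉ X ∧ halfIn G X w) ∨ (w ∈ X ∧ v ∉ X ∧ halfIn G X v)) ∧ G.Adj v w)
  symm := by
    refine ⟨?_⟩
    rintro v w (⟨h1, h2, h3⟩ | ⟨h1, h2⟩)
    · exact Or.inl ⟨h1.symm, fun h => h2 h.symm, h3.symm⟩
    · exact Or.inr ⟨fun h => h1 h.symm, h2.symm⟩
  loopless := by
    refine ⟨?_⟩
    rintro v (⟨h1, h2, h3⟩ | ⟨h1, h2⟩)
    · exact h3 rfl
    · exact G.loopless.irrefl v h2

noncomputable instance {K V : Type*} [Field K] [AddCommGroup V] [Module K V] [Finite V]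
    (Q : QuadraticForm K V) : Fintype (QuadricPoint Q) := by
  have : Finite (Projectivization K V) := Quotient.finite _
  exact Fintype.ofFinite _

end Defs

/- **Statement 9**: every generator of a non-singular quadric in `PG(n,2)` contains a point
of type (ii) relative to `α`: a point `x ∉ α` with `⟨α, x⟩` an `(s+1)`-space contained in
the quadric. -/
set_option maxHeartbeats 1000000 in
set_option synthInstance.maxHeartbeats 200000 in
theorem generator_contains_typeII_point (n g s : ℕ) (hs : s < g)
    (Q : QuadraticForm (ZMod 2) (Fin (n + 1) → ZMod 2)) (hQ : quadricNonsingular Q)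
    (hgi : projIndex Q g)
    (α : Submodule (ZMod 2) (Fin (n + 1) → ZMod 2)) (hα : totallySingular Q α)
    (hαd : Module.finrank (ZMod 2) ↥α = s + 1)
    (W : Submodule (ZMod 2) (Fin (n + 1) → ZMod 2)) (hW : isGenerator Q g W) :
    ∃ x ∈ W, x ≠ 0 ∧ x ∉ α ∧
      totallySingular Q (α ⊔ Submodule.span (ZMod 2) {x}) ∧
      Module.finrank (ZMod 2) ↥(α ⊔ Submodule.span (ZMod 2) {x}) = s + 2 := by
  obtain ⟨hWs, hWd⟩ := hW
  replace hα : ∀ v ∈ α, Q v = 0 := hα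
  classical
  have hpol : ∀ T : Submodule (ZMod 2) (Fin (n + 1) → ZMod 2), (∀ v ∈ T, Q v = 0) →
      ∀ v ∈ T, ∀ w ∈ T, QuadraticMap.polar ⇑Q v w = 0 := by
    intro T hT v hv w hw
    have h1 : Q (v + w) = 0 := hT _ (T.add_mem hv hw)
    simp [QuadraticMap.polar, h1, hT v hv, hT w hw]
  -- the map ψ : W → Dual α,  w ↦ (a ↦ polar a w)
  obtain ⟨ψ, hψ⟩ : ∃ ψ : ↥W →ₗ[ZMod 2] Module.Dual (ZMod 2) ↥α,
      ∀ (w : ↥W) (a : ↥α), ψ w a = QuadraticMap.polar ⇑Q (a : _) (w : _) :=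
    ⟨(((QuadraticMap.polarBilin Q).flip.compl₂ α.subtype).domRestrict W), fun w a => rfl⟩
  -- S = α ∩ W viewed inside α
  set S : Submodule (ZMod 2) ↥α := (α ⊓ W).comap α.subtype with hS
  have hSrank : Module.finrank (ZMod 2) S = Module.finrank (ZMod 2) ↥(α ⊓ W) :=
    (Submodule.comapSubtypeEquivOfLe inf_le_left).finrank_eq
  -- range ψ lies in the dual annihilator of S
  have hrange : LinearMap.range ψ ≤ S.dualAnnihilator := by
    rintro f ⟨w, rfl⟩
    rw [Submodule.mem_dualAnnihilator]
    intro a ha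
    rw [hψ]
    exact hpol W hWs a (Submodule.mem_comap.mp ha).2 w w.2
  have hannih : Module.finrank (ZMod 2) S.dualAnnihilator + Module.finrank (ZMod 2) S
      = Module.finrank (ZMod 2) ↥α := by
    rw [← (Subspace.quotEquivAnnihilator S).finrank_eq]
    exact Submodule.finrank_quotient_add_finrank S
  have hrk : Module.finrank (ZMod 2) (LinearMap.range ψ) + Module.finrank (ZMod 2) (LinearMap.ker ψ)
      = g + 1 := by rw [LinearMap.finrank_range_add_finrank_ker ψ, hWd]
  have hle : Module.finrank (ZMod 2) (LinearMap.range ψ) ≤ Module.finrank (ZMod 2) S.dualAnnihilator :=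
    Submodule.finrank_mono hrange
  -- the kernel, as a submodule of V
  set T : Submodule (ZMod 2) (Fin (n + 1) → ZMod 2) := (LinearMap.ker ψ).map W.subtype with hT
  have hTrank : Module.finrank (ZMod 2) T = Module.finrank (ZMod 2) (LinearMap.ker ψ) :=
    Submodule.finrank_map_subtype_eq W (LinearMap.ker ψ)
  have hlt : Module.finrank (ZMod 2) ↥(α ⊓ W) < Module.finrank (ZMod 2) T := by
    rw [hTrank]; rw [← hSrank]; omega
  have hnle : ¬ (T ≤ α ⊓ W) := fun h => absurd (Submodule.finrank_mono h) (by omega)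
  obtain ⟨x, hxT, hxnot⟩ := Set.not_subset.mp hnle
  have hxW : x ∈ W := by
    obtain ⟨w, hw, rfl⟩ := hxT
    exact w.2
  have hxα : x ∉ α := fun h => hxnot ⟨h, hxW⟩
  have hx0 : x ≠ 0 := fun h => hxα (h ▸ α.zero_mem)
  have hxorth : ∀ a ∈ α, QuadraticMap.polar ⇑Q a x = 0 := by
    intro a ha
    obtain ⟨w, hw, rfl⟩ := hxT
    have := LinearMap.mem_ker.mp hw
    have := congrArg (fun f => f ⟨a, ha⟩) this
    simpa [hψ] using this
  refine ⟨x, hxW, hx0, hxα, ?_, ?_⟩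
  · intro v hv
    obtain ⟨a, ha, b, hb, rfl⟩ := Submodule.mem_sup.mp hv
    obtain ⟨c, rfl⟩ := Submodule.mem_span_singleton.mp hb
    have h1 : Q (a + c • x) = Q a + Q (c • x) + QuadraticMap.polar ⇑Q a (c • x) := by
      simp only [QuadraticMap.polar]
      ring
    rw [h1, hα a ha, QuadraticMap.map_smul, QuadraticMap.polar_smul_right, hWs x hxW,
      hxorth a ha]
    simp
  · have hinf : α ⊓ Submodule.span (ZMod 2) {x} = ⊥ := by
      rw [eq_bot_iff]
      rintro v ⟨hv1, hv2⟩
      obtain ⟨c, rfl⟩ := Submodule.mem_span_singleton.mp hv2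
      rcases eq_or_ne c 0 with rfl | hc
      · simp
      · exact absurd (by simpa [inv_smul_smul₀ hc] using α.smul_mem c⁻¹ hv1) hxα
    have := Submodule.finrank_sup_add_finrank_inf_eq α (Submodule.span (ZMod 2) {x})
    rw [hinf, hαd, finrank_span_singleton hx0] at this
    simpa using this
end

section
/- Let Γ_s be the switched graph obtained from the point-graph Γ of a non-singular quadric Q in PG(n,2) of projective index g, using an s-space α in Q with 0 ≤ s < g. If Σ and Π are generators of Q such that α ⊂ Σ, α ⊄ Π, and Σ ∩ Π is a (g−1)-space, then the set consisting of the points of α ∩ Π, the points of Σ not in α ∪ Π, and the points of Π∖Σ is a clique of Γ_s of size 2^{g+1}−1. -/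
section Aux

open Submodule Module QuadraticMap

lemma zmod2_cases (c : ZMod 2) : c = 0 ∨ c = 1 := by revert c; decide

lemma proj_rep_inj {K V : Type*} [Field K] [AddCommGroup V] [Module K V]
    {x y : Projectivization K V} (h : x.rep = y.rep) : x = y := by
  rw [← x.mk_rep, ← y.mk_rep]
  exact (Projectivization.mk_eq_mk_iff K _ _ _ _).mpr ⟨1, by simp [h]⟩

lemma rep_mk_zmod2 {V : Type*} [AddCommGroup V] [Module (ZMod 2) V] (v : V) (hv : v ≠ 0) :
    (Projectivization.mk (ZMod 2) v hv).rep = v := by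
  obtain ⟨a, ha⟩ := Projectivization.exists_smul_eq_mk_rep (ZMod 2) v hv
  have h1 : (a : ZMod 2) = 1 := by
    rcases zmod2_cases (a : ZMod 2) with h | h
    · exact absurd h a.ne_zero
    · exact h
  rw [← ha, Units.smul_def, h1, one_smul]

lemma polar_eq_zero_of_ts {V : Type*} [AddCommGroup V] [Module (ZMod 2) V]
    {Q : QuadraticForm (ZMod 2) V} {W : Submodule (ZMod 2) V} (hW : totallySingular Q W)
    {u v : V} (hu : u ∈ W) (hv : v ∈ W) : polar ⇑Q u v = 0 := by
  simp [QuadraticMap.polar, hW _ (add_mem hu hv), hW _ hu, hW _ hv]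

lemma no_perp_all {n g : ℕ} {Q : QuadraticForm (ZMod 2) (Fin (n + 1) → ZMod 2)}
    (hgi : projIndex Q g) {W : Submodule (ZMod 2) (Fin (n + 1) → ZMod 2)}
    (hW : totallySingular Q W)
    (hWd : Module.finrank (ZMod 2) ↥W = g + 1) {v : Fin (n + 1) → ZMod 2}
    (hv : Q v = 0) (hvW : v ∉ W)
    (hperp : ∀ w ∈ W, polar ⇑Q w v = 0) : False := by
  have hts : totallySingular Q (W ⊔ Submodule.span (ZMod 2) {v}) := by
    intro x hx
    rw [Submodule.mem_sup] at hx
    obtain ⟨w, hw, z, hz, rfl⟩ := hx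
    rw [Submodule.mem_span_singleton] at hz
    obtain ⟨c, rfl⟩ := hz
    rcases zmod2_cases c with rfl | rfl
    · simpa using hW w hw
    · have hp : Q (w + v) = polar ⇑Q w v + Q w + Q v := by
        rw [QuadraticMap.polar]; ring
      simp [hp, hperp w hw, hW w hw, hv]
  have hsp : v ∈ W ⊔ Submodule.span (ZMod 2) {v} :=
    Submodule.mem_sup_right (Submodule.mem_span_singleton_self v)
  have hlt : W < W ⊔ Submodule.span (ZMod 2) {v} :=
    lt_of_le_of_ne le_sup_left (fun h => hvW (by rw [h]; exact hsp))
  have h1 := Submodule.finrank_lt_finrank_of_lt hlt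
  have h2 := hgi.2 _ hts
  omega

lemma sup_span_eq {n : ℕ} {W W' : Submodule (ZMod 2) (Fin (n + 1) → ZMod 2)}
    {v : Fin (n + 1) → ZMod 2} (hle : W ≤ W') (hv : v ∈ W') (hvW : v ∉ W)
    (hd : Module.finrank (ZMod 2) ↥W + 1 = Module.finrank (ZMod 2) ↥W') :
    W ⊔ Submodule.span (ZMod 2) {v} = W' := by
  apply Submodule.eq_of_le_of_finrank_le
    (sup_le hle ((Submodule.span_le).mpr (Set.singleton_subset_iff.mpr hv)))
  have hsp : v ∈ W ⊔ Submodule.span (ZMod 2) {v} :=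
    Submodule.mem_sup_right (Submodule.mem_span_singleton_self v)
  have hlt : W < W ⊔ Submodule.span (ZMod 2) {v} :=
    lt_of_le_of_ne le_sup_left (fun h => hvW (by rw [h]; exact hsp))
  have h1 := Submodule.finrank_lt_finrank_of_lt hlt
  omega

lemma secant_of_polar {V : Type*} [AddCommGroup V] [Module (ZMod 2) V]
    {Q : QuadraticForm (ZMod 2) V} (p q : QuadricPoint Q) (hne : p.1 ≠ q.1)
    (hpol : polar ⇑Q p.1.rep q.1.rep ≠ 0) : secant2 Q p q := by
  have hset : {x : Projectivization (ZMod 2) V |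
      x.rep ∈ p.1.submodule ⊔ q.1.submodule ∧ Q x.rep = 0} = {p.1, q.1} := by
    ext x
    simp only [Set.mem_setOf_eq, Set.mem_insert_iff, Set.mem_singleton_iff]
    constructor
    · rintro ⟨hx, hQx⟩
      rw [Projectivization.submodule_eq, Projectivization.submodule_eq] at hx
      have hx' : x.rep ∈ Submodule.span (ZMod 2) {p.1.rep, q.1.rep} := by
        rw [Submodule.span_insert]; exact hx
      rw [Submodule.mem_span_pair] at hx'
      obtain ⟨a, b, hab⟩ := hx'
      rcases zmod2_cases a with rfl | rfl <;> rcases zmod2_cases b with rfl | rfl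
      · simp at hab; exact absurd hab.symm x.rep_nonzero
      · right; apply proj_rep_inj; simpa using hab.symm
      · left; apply proj_rep_inj; simpa using hab.symm
      · exfalso
        have hx2 : x.rep = p.1.rep + q.1.rep := by simpa using hab.symm
        have hQpq : Q (p.1.rep + q.1.rep) = polar ⇑Q p.1.rep q.1.rep + Q p.1.rep + Q q.1.rep := by
          rw [QuadraticMap.polar]; ring
        rw [hx2, hQpq, p.2, q.2, add_zero, add_zero] at hQx
        exact hpol hQx
    · rintro (rfl | rfl)
      · exact ⟨Submodule.mem_sup_left
          (by rw [Projectivization.submodule_eq]; exact Submodule.mem_span_singleton_self _), p.2⟩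
      · exact ⟨Submodule.mem_sup_right
          (by rw [Projectivization.submodule_eq]; exact Submodule.mem_span_singleton_self _), q.2⟩
  unfold secant2
  rw [hset, Set.ncard_pair hne]

lemma ncard_submodule {n : ℕ} (W : Submodule (ZMod 2) (Fin (n + 1) → ZMod 2)) :
    (W : Set (Fin (n + 1) → ZMod 2)).ncard = 2 ^ Module.finrank (ZMod 2) ↥W := by
  rw [← Nat.card_coe_set_eq]
  have : Nat.card ↥(W : Set (Fin (n + 1) → ZMod 2)) = Nat.card ↥W := rfl
  rw [this]
  have : Fintype ↥W := Fintype.ofFinite _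
  rw [Nat.card_eq_fintype_card, card_eq_pow_finrank (K := ZMod 2), ZMod.card]

end Aux

set_option maxHeartbeats 1000000

theorem classB_is_clique (n g s : ℕ) (hg : 1 ≤ g) (hs : s < g)
    (Q : QuadraticForm (ZMod 2) (Fin (n + 1) → ZMod 2)) (hQ : quadricNonsingular Q)
    (hgi : projIndex Q g)
    (α : Submodule (ZMod 2) (Fin (n + 1) → ZMod 2)) (hα : totallySingular Q α)
    (hαd : Module.finrank (ZMod 2) ↥α = s + 1)
    (S P : Submodule (ZMod 2) (Fin (n + 1) → ZMod 2))
    (hS : isGenerator Q g S) (hP : isGenerator Q g P)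
    (hαS : α ≤ S) (hαP : ¬ α ≤ P)
    (hSP : Module.finrank (ZMod 2) ↥(S ⊓ P) = g) :
    (gammaS Q α).IsClique
      {p : QuadricPoint Q | (p.1.rep ∈ α ∧ p.1.rep ∈ P) ∨
        (p.1.rep ∈ S ∧ p.1.rep ∉ α ∧ p.1.rep ∉ P) ∨ (p.1.rep ∈ P ∧ p.1.rep ∉ S)} ∧
    {p : QuadricPoint Q | (p.1.rep ∈ α ∧ p.1.rep ∈ P) ∨
        (p.1.rep ∈ S ∧ p.1.rep ∉ α ∧ p.1.rep ∉ P) ∨ (p.1.rep ∈ P ∧ p.1.rep ∉ S)}.ncard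
      = 2 ^ (g + 1) - 1 := by
  classical
  obtain ⟨a₀, ha₀α, ha₀P⟩ := SetLike.not_le_iff_exists.mp hαP
  have hPdec : ∀ v : Fin (n + 1) → ZMod 2, v ∈ P → v ∉ S →
      (S ⊓ P) ⊔ Submodule.span (ZMod 2) {v} = P := fun v hvP hvS =>
    sup_span_eq inf_le_right hvP (fun h => hvS (Submodule.mem_inf.mp h).1)
      (by rw [hSP, hP.2])
  have hSdec : ∀ u : Fin (n + 1) → ZMod 2, u ∈ S → u ∉ P →
      (S ⊓ P) ⊔ Submodule.span (ZMod 2) {u} = S := fun u huS huP =>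
    sup_span_eq inf_le_left huS (fun h => huP (Submodule.mem_inf.mp h).2)
      (by rw [hSP, hS.2])
  have factA : ∀ v : Fin (n + 1) → ZMod 2, v ∈ P → v ∉ S →
      ¬ totallySingular Q (α ⊔ Submodule.span (ZMod 2) {v}) := by
    intro v hvP hvS hts
    apply no_perp_all hgi hP.1 hP.2 (hα a₀ ha₀α) ha₀P
    intro y hyP
    rw [← hPdec v hvP hvS, Submodule.mem_sup] at hyP
    obtain ⟨z, hz, w, hw, rfl⟩ := hyP
    rw [Submodule.mem_span_singleton] at hw
    obtain ⟨c, rfl⟩ := hw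
    have h1 : QuadraticMap.polar ⇑Q z a₀ = 0 :=
      polar_eq_zero_of_ts hS.1 (Submodule.mem_inf.mp hz).1 (hαS ha₀α)
    have h2 : QuadraticMap.polar ⇑Q v a₀ = 0 :=
      polar_eq_zero_of_ts hts (Submodule.mem_sup_right (Submodule.mem_span_singleton_self v))
        (Submodule.mem_sup_left ha₀α)
    rw [QuadraticMap.polar_add_left, QuadraticMap.polar_smul_left, h1, h2]
    simp
  have factB : ∀ u v : Fin (n + 1) → ZMod 2, u ∈ S → u ∉ P → v ∈ P → v ∉ S →
      QuadraticMap.polar ⇑Q u v ≠ 0 := by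
    intro u v huS huP hvP hvS hpol
    apply no_perp_all hgi hS.1 hS.2 (hP.1 v hvP) hvS
    intro y hyS
    rw [← hSdec u huS huP, Submodule.mem_sup] at hyS
    obtain ⟨z, hz, w, hw, rfl⟩ := hyS
    rw [Submodule.mem_span_singleton] at hw
    obtain ⟨c, rfl⟩ := hw
    have h1 : QuadraticMap.polar ⇑Q z v = 0 :=
      polar_eq_zero_of_ts hP.1 (Submodule.mem_inf.mp hz).2 hvP
    rw [QuadraticMap.polar_add_left, QuadraticMap.polar_smul_left, h1, hpol]
    simp
  have hsub : ∀ (p : QuadricPoint Q) (W : Submodule (ZMod 2) (Fin (n + 1) → ZMod 2)),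
      p.1.rep ∈ W → p.1.submodule ≤ W := by
    intro p W h
    rw [Projectivization.submodule_eq]
    exact (Submodule.span_le).mpr (Set.singleton_subset_iff.mpr h)
  constructor
  · intro p hp q hq hne
    have hne1 : p.1 ≠ q.1 := fun h => hne (Subtype.ext h)
    have hTII : ∀ r : QuadricPoint Q, r.1.rep ∈ S → r.1.rep ∉ α → typeII Q α r :=
      fun r h1 h2 => ⟨h2, fun v hv => hS.1 v ((sup_le hαS (hsub r S h1)) hv)⟩
    have hTIII : ∀ r : QuadricPoint Q, r.1.rep ∈ P → r.1.rep ∉ S → typeIII Q α r := by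
      intro r h1 h2
      refine ⟨fun h => h2 (hαS h), ?_⟩
      rw [Projectivization.submodule_eq]
      exact factA _ h1 h2
    have hNII : ∀ r : QuadricPoint Q, r.1.rep ∈ P → r.1.rep ∉ S → ¬ typeII Q α r := by
      intro r h1 h2 ht
      rw [typeII, Projectivization.submodule_eq] at ht
      exact factA _ h1 h2 ht.2
    have hNIII : ∀ r : QuadricPoint Q, r.1.rep ∈ S → ¬ typeIII Q α r :=
      fun r h1 ht => ht.2 (fun v hv => hS.1 v ((sup_le hαS (hsub r S h1)) hv))
    have adjW : ∀ (W : Submodule (ZMod 2) (Fin (n + 1) → ZMod 2)), totallySingular Q W →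
        p.1.rep ∈ W → q.1.rep ∈ W →
        totallySingular Q (p.1.submodule ⊔ q.1.submodule) :=
      fun W hW h1 h2 v hv => hW v ((sup_le (hsub p W h1) (hsub q W h2)) hv)
    rcases hp with ⟨hpα, hpP⟩ | ⟨hpS, hpα, hpP⟩ | ⟨hpP, hpS⟩ <;>
      rcases hq with ⟨hqα, hqP⟩ | ⟨hqS, hqα, hqP⟩ | ⟨hqP, hqS⟩
    -- (1,1)
    · have hnm : ¬ mixedPair Q α p q := by
        rintro (⟨⟨h, -⟩, -⟩ | ⟨-, ⟨h, -⟩⟩) <;> exact h hpα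
      exact ⟨hne, fun hm => absurd hm hnm, fun _ => adjW S hS.1 (hαS hpα) (hαS hqα)⟩
    -- (1,2)
    · have hnm : ¬ mixedPair Q α p q := by
        rintro (⟨⟨h, -⟩, -⟩ | ⟨-, ⟨h, -⟩⟩) <;> exact h hpα
      exact ⟨hne, fun hm => absurd hm hnm, fun _ => adjW S hS.1 (hαS hpα) hqS⟩
    -- (1,3)
    · have hnm : ¬ mixedPair Q α p q := by
        rintro (⟨⟨h, -⟩, -⟩ | ⟨-, ⟨h, -⟩⟩) <;> exact h hpα
      exact ⟨hne, fun hm => absurd hm hnm, fun _ => adjW P hP.1 hpP hqP⟩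
    -- (2,1)
    · have hnm : ¬ mixedPair Q α p q := by
        rintro (⟨-, ⟨h, -⟩⟩ | ⟨⟨h, -⟩, -⟩) <;> exact h hqα
      exact ⟨hne, fun hm => absurd hm hnm, fun _ => adjW S hS.1 hpS (hαS hqα)⟩
    -- (2,2)
    · have hnm : ¬ mixedPair Q α p q := by
        rintro (⟨-, h3⟩ | ⟨-, h3⟩)
        · exact hNIII q hqS h3
        · exact hNIII p hpS h3
      exact ⟨hne, fun hm => absurd hm hnm, fun _ => adjW S hS.1 hpS hqS⟩
    -- (2,3)
    · have hm : mixedPair Q α p q := Or.inl ⟨hTII p hpS hpα, hTIII q hqP hqS⟩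
      exact ⟨hne, fun _ => secant_of_polar p q hne1 (factB _ _ hpS hpP hqP hqS),
        fun h => absurd hm h⟩
    -- (3,1)
    · have hnm : ¬ mixedPair Q α p q := by
        rintro (⟨-, ⟨h, -⟩⟩ | ⟨⟨h, -⟩, -⟩) <;> exact h hqα
      exact ⟨hne, fun hm => absurd hm hnm, fun _ => adjW P hP.1 hpP hqP⟩
    -- (3,2)
    · have hm : mixedPair Q α p q := Or.inr ⟨hTII q hqS hqα, hTIII p hpP hpS⟩
      refine ⟨hne, fun _ => secant_of_polar p q hne1 ?_, fun h => absurd hm h⟩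
      rw [QuadraticMap.polar_comm]
      exact factB _ _ hqS hqP hpP hpS
    -- (3,3)
    · have hnm : ¬ mixedPair Q α p q := by
        rintro (⟨h2, -⟩ | ⟨h2, -⟩)
        · exact hNII p hpP hpS h2
        · exact hNII q hqP hqS h2
      exact ⟨hne, fun hm => absurd hm hnm, fun _ => adjW P hP.1 hpP hqP⟩
  · -- cardinality
    have hrepinj : Set.InjOn (fun p : QuadricPoint Q => p.1.rep)
        {p : QuadricPoint Q | (p.1.rep ∈ α ∧ p.1.rep ∈ P) ∨
          (p.1.rep ∈ S ∧ p.1.rep ∉ α ∧ p.1.rep ∉ P) ∨ (p.1.rep ∈ P ∧ p.1.rep ∉ S)} :=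
      fun p _ q _ h => Subtype.ext (proj_rep_inj h)
    rw [← Set.ncard_image_of_injOn hrepinj]
    set A1 : Set (Fin (n + 1) → ZMod 2) := ((α ⊓ P : Submodule _ _) : Set (Fin (n + 1) → ZMod 2)) \ {0} with hA1
    set A2 : Set (Fin (n + 1) → ZMod 2) := (S : Set (Fin (n + 1) → ZMod 2)) \ ((α : Set (Fin (n + 1) → ZMod 2)) ∪ (P : Set (Fin (n + 1) → ZMod 2))) with hA2
    set A3 : Set (Fin (n + 1) → ZMod 2) := (P : Set (Fin (n + 1) → ZMod 2)) \ (S : Set (Fin (n + 1) → ZMod 2)) with hA3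
    have himg : (fun p : QuadricPoint Q => p.1.rep) ''
        {p : QuadricPoint Q | (p.1.rep ∈ α ∧ p.1.rep ∈ P) ∨
          (p.1.rep ∈ S ∧ p.1.rep ∉ α ∧ p.1.rep ∉ P) ∨ (p.1.rep ∈ P ∧ p.1.rep ∉ S)}
        = A1 ∪ A2 ∪ A3 := by
      ext v
      simp only [Set.mem_image, Set.mem_setOf_eq, hA1, hA2, hA3, Set.mem_union, Set.mem_diff,
        Set.mem_singleton_iff, SetLike.mem_coe, Submodule.mem_inf]
      constructor
      · rintro ⟨p, hp, rfl⟩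
        rcases hp with ⟨h1, h2⟩ | ⟨h1, h2, h3⟩ | ⟨h1, h2⟩
        · exact Or.inl (Or.inl ⟨⟨h1, h2⟩, p.1.rep_nonzero⟩)
        · exact Or.inl (Or.inr ⟨h1, by tauto⟩)
        · exact Or.inr ⟨h1, h2⟩
      · intro hv
        have hv0 : v ≠ 0 := by
          rcases hv with (⟨-, h⟩ | ⟨-, h⟩) | ⟨-, h⟩
          · exact h
          · rintro rfl; exact h (Or.inl α.zero_mem)
          · rintro rfl; exact h S.zero_mem
        have hQv : Q v = 0 := by
          rcases hv with (⟨⟨h, -⟩, -⟩ | ⟨h, -⟩) | ⟨h, -⟩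
          · exact hα v h
          · exact hS.1 v h
          · exact hP.1 v h
        refine ⟨⟨Projectivization.mk (ZMod 2) v hv0, by rwa [rep_mk_zmod2]⟩, ?_,
          rep_mk_zmod2 v hv0⟩
        simp only [Set.mem_setOf_eq, rep_mk_zmod2]
        tauto
    rw [himg]
    have hd1 : Module.finrank (ZMod 2) ↥(α ⊓ P) = s := by
      have hlt : α ⊓ P < α := lt_of_le_of_ne inf_le_left
        (fun h => hαP (by rw [← h]; exact inf_le_right))
      have h1 := Submodule.finrank_lt_finrank_of_lt hlt
      have h2 := Submodule.finrank_sup_add_finrank_inf_eq α (S ⊓ P)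
      have h3 : α ⊓ (S ⊓ P) = α ⊓ P := by
        rw [← inf_assoc, inf_of_le_left hαS]
      have h4 : Module.finrank (ZMod 2) ↥(α ⊔ (S ⊓ P)) ≤ g + 1 := by
        rw [← hS.2]; exact Submodule.finrank_mono (sup_le hαS inf_le_left)
      rw [h3, hαd, hSP] at h2
      rw [hαd] at h1
      omega
    -- building-block equations
    have e0 : ((α ⊓ P : Submodule _ _) : Set (Fin (n + 1) → ZMod 2)).ncard = 2 ^ s := by
      rw [ncard_submodule, hd1]
    have e1 : A1.ncard + 1 = 2 ^ s := by
      have := Set.ncard_diff_add_ncard_of_subset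
        (Set.singleton_subset_iff.mpr (by simpa using (α ⊓ P).zero_mem) :
          ({0} : Set (Fin (n + 1) → ZMod 2)) ⊆ ((α ⊓ P : Submodule _ _) : Set (Fin (n + 1) → ZMod 2)))
        (Set.toFinite _)
      rw [ncard_submodule, hd1, Set.ncard_singleton] at this
      rw [hA1]; exact this
    have hA2eq : A2 = (S : Set (Fin (n + 1) → ZMod 2)) \ ((α : Set (Fin (n + 1) → ZMod 2)) ∪ ((S ⊓ P : Submodule _ _) : Set (Fin (n + 1) → ZMod 2))) := by
      ext v
      simp only [hA2, Set.mem_diff, Set.mem_union, SetLike.mem_coe, Submodule.mem_inf]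
      tauto
    have hsubU : (α : Set (Fin (n + 1) → ZMod 2)) ∪ ((S ⊓ P : Submodule _ _) : Set (Fin (n + 1) → ZMod 2)) ⊆ (S : Set (Fin (n + 1) → ZMod 2)) := by
      rintro v (h | h)
      · exact hαS h
      · exact (Submodule.mem_inf.mp h).1
    have e2 : A2.ncard + ((α : Set (Fin (n + 1) → ZMod 2)) ∪ ((S ⊓ P : Submodule _ _) : Set (Fin (n + 1) → ZMod 2))).ncard
        = 2 ^ (g + 1) := by
      have := Set.ncard_diff_add_ncard_of_subset hsubU (Set.toFinite _)
      rw [ncard_submodule, hS.2] at this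
      rw [hA2eq]; exact this
    have e3 : ((α ⊓ P : Submodule _ _) : Set (Fin (n + 1) → ZMod 2)).ncard
        + ((α : Set (Fin (n + 1) → ZMod 2)) ∪ ((S ⊓ P : Submodule _ _) : Set (Fin (n + 1) → ZMod 2))).ncard
        = 2 ^ (s + 1) + 2 ^ g := by
      have h5 := Set.ncard_inter_add_ncard_union (α : Set (Fin (n + 1) → ZMod 2))
        ((S ⊓ P : Submodule _ _) : Set (Fin (n + 1) → ZMod 2)) (Set.toFinite _) (Set.toFinite _)
      have h6 : (α : Set (Fin (n + 1) → ZMod 2)) ∩ ((S ⊓ P : Submodule _ _) : Set (Fin (n + 1) → ZMod 2))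
          = ((α ⊓ P : Submodule _ _) : Set (Fin (n + 1) → ZMod 2)) := by
        ext v
        simp only [Set.mem_inter_iff, SetLike.mem_coe, Submodule.mem_inf]
        exact ⟨fun ⟨h1, h2⟩ => ⟨h1, h2.2⟩, fun ⟨h1, h2⟩ => ⟨h1, hαS h1, h2⟩⟩
      rw [h6] at h5
      rw [h5, ncard_submodule, ncard_submodule, hαd, hSP]
    have hA3eq : A3 = (P : Set (Fin (n + 1) → ZMod 2)) \ ((S ⊓ P : Submodule _ _) : Set (Fin (n + 1) → ZMod 2)) := by
      ext v
      simp only [hA3, Set.mem_diff, SetLike.mem_coe, Submodule.mem_inf]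
      tauto
    have e4 : A3.ncard + 2 ^ g = 2 ^ (g + 1) := by
      have h7 : ((S ⊓ P : Submodule _ _) : Set (Fin (n + 1) → ZMod 2)) ⊆ (P : Set (Fin (n + 1) → ZMod 2)) :=
        fun v h => (Submodule.mem_inf.mp h).2
      have h8 := Set.ncard_diff_add_ncard_of_subset h7 (Set.toFinite _)
      rw [ncard_submodule, ncard_submodule, hSP, hP.2] at h8
      rw [hA3eq]; exact h8
    have d12 : Disjoint A1 A2 := by
      rw [Set.disjoint_left]
      rintro v ⟨h1, -⟩ ⟨-, h2⟩
      exact h2 (Or.inl (Submodule.mem_inf.mp h1).1)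
    have d123 : Disjoint (A1 ∪ A2) A3 := by
      rw [Set.disjoint_left]
      rintro v (⟨h1, -⟩ | ⟨h1, -⟩) ⟨-, h2⟩
      · exact h2 (hαS (Submodule.mem_inf.mp h1).1)
      · exact h2 h1
    rw [Set.ncard_union_eq d123 (Set.toFinite _) (Set.toFinite _),
      Set.ncard_union_eq d12 (Set.toFinite _) (Set.toFinite _)]
    have p1 : 2 ^ (s + 1) = 2 * 2 ^ s := by ring
    have p2 : 2 ^ (g + 1) = 2 * 2 ^ g := by ring
    have p3 : 2 ^ (s + 1) ≤ 2 ^ g := Nat.pow_le_pow_right (by norm_num) hs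
    omega
end
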